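/- arXiv:2002.10118 — 2 statements merged into one kernel-verified Lean document; each statement's English description precedes it below -/
import Mathlib

section
/- Let f ∈ ℝ, d ∈ ℝ^p, and let H be a p×p real symmetric positive semidefinite matrix. For s > 0 define z(s) = f / √(1 + (π/8)·dᵀ·(s⁻¹·I + H)⁻¹·d). Then the map s ↦ σ(|z(s)|) is antitone (non-increasing) on (0, ∞). (Monotonicity claim of Proposition 2.5 / the last-layer Laplace proposition: the confidence σ(|z(x)|) is a decreasing function of the prior variance σ₀² = s.) -/
open Matrix

lemma sigmoid_aux_smul_posDef {p : ℕ} {c : ℝ} (hc : 0 < c)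
    {B : Matrix (Fin p) (Fin p) ℝ} (hB : B.PosDef) : (c • B).PosDef := by
  refine Matrix.PosDef.of_dotProduct_mulVec_pos ?_ (fun x hx => ?_)
  · have hs : Bᵀ = B := by simpa using hB.1.eq
    simp [Matrix.IsHermitian, Matrix.conjTranspose_smul, hs]
  · rw [Matrix.smul_mulVec, dotProduct_smul, smul_eq_mul]
    exact mul_pos hc (hB.dotProduct_mulVec_pos hx)

lemma sigmoid_aux_quad_mono {p : ℕ} (d : Fin p → ℝ)
    {B : Matrix (Fin p) (Fin p) ℝ} (hB : B.PosDef) {c : ℝ} (hc : 0 ≤ c) :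
    d ⬝ᵥ ((B + c • (1 : Matrix (Fin p) (Fin p) ℝ))⁻¹ *ᵥ d) ≤ d ⬝ᵥ (B⁻¹ *ᵥ d) := by
  rcases hc.eq_or_lt with rfl | hc
  · simp
  set A := B + c • (1 : Matrix (Fin p) (Fin p) ℝ) with hAdef
  have hA : A.PosDef := hB.add_posSemidef ((sigmoid_aux_smul_posDef hc Matrix.PosDef.one).posSemidef)
  have hAdet : IsUnit A.det := hA.det_pos.ne'.isUnit
  have hBdet : IsUnit B.det := hB.det_pos.ne'.isUnit
  have h1 : A * B = B * B + c • B := by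
    rw [hAdef, add_mul, Matrix.smul_mul, one_mul]
  have hBBsd : (B * B).PosSemidef := by
    have := Matrix.posSemidef_conjTranspose_mul_self B
    rwa [hB.1.eq] at this
  have hABpd : (A * B).PosDef := by
    rw [h1]
    exact Matrix.PosDef.posSemidef_add hBBsd (sigmoid_aux_smul_posDef hc hB)
  have key : B⁻¹ - A⁻¹ = c • (A * B)⁻¹ := by
    have h2 : (c • (1 : Matrix (Fin p) (Fin p) ℝ)) = A - B := by
      rw [hAdef, add_sub_cancel_left]
    have : B⁻¹ - A⁻¹ = B⁻¹ * (c • (1 : Matrix (Fin p) (Fin p) ℝ)) * A⁻¹ := by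
      rw [h2, mul_sub, sub_mul, mul_assoc, Matrix.mul_nonsing_inv _ hAdet, mul_one,
        Matrix.nonsing_inv_mul _ hBdet, one_mul]
    rw [this, Matrix.mul_inv_rev, mul_smul_comm, mul_one, Matrix.smul_mul]
  have hq : 0 ≤ d ⬝ᵥ ((A * B)⁻¹ *ᵥ d) := by
    have := hABpd.inv.posSemidef.dotProduct_mulVec_nonneg d
    simpa using this
  have : 0 ≤ d ⬝ᵥ (B⁻¹ *ᵥ d) - d ⬝ᵥ (A⁻¹ *ᵥ d) := by
    rw [← dotProduct_sub, ← Matrix.sub_mulVec, key, Matrix.smul_mulVec,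
      dotProduct_smul, smul_eq_mul]
    exact mul_nonneg hc.le hq
  linarith

/-- The logistic (sigmoid) function. -/
noncomputable def sigmoid (t : ℝ) : ℝ := 1 / (1 + Real.exp (-t))

lemma sigmoid_mono : Monotone sigmoid := by
  intro a b hab
  unfold sigmoid
  have h1 : (0:ℝ) < 1 + Real.exp (-b) := by positivity
  have h2 : 1 + Real.exp (-b) ≤ 1 + Real.exp (-a) := by
    have := Real.exp_le_exp.2 (neg_le_neg hab)
    linarith
  exact one_div_le_one_div_of_le h1 h2


/-- Monotonicity claim of Proposition 2.5: the confidence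
`σ(|f / √(1 + (π/8)·dᵀ(s⁻¹·I + H)⁻¹d)|)` is a non-increasing function of the
prior variance `s` on `(0, ∞)`. -/
theorem antitoneOn_confidence_priorVar {p : ℕ}
    (f : ℝ) (d : Fin p → ℝ)
    (H : Matrix (Fin p) (Fin p) ℝ) (hH : H.PosSemidef) :
    AntitoneOn
      (fun s : ℝ =>
        sigmoid |f / Real.sqrt (1 + Real.pi / 8 *
          (d ⬝ᵥ ((s⁻¹ • (1 : Matrix (Fin p) (Fin p) ℝ) + H)⁻¹ *ᵥ d)))|)
      (Set.Ioi 0) := by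
  intro s hs t ht hst
  simp only [Set.mem_Ioi] at hs ht
  set A := s⁻¹ • (1 : Matrix (Fin p) (Fin p) ℝ) + H with hAdef
  set B := t⁻¹ • (1 : Matrix (Fin p) (Fin p) ℝ) + H with hBdef
  have hA : A.PosDef :=
    (sigmoid_aux_smul_posDef (by positivity) Matrix.PosDef.one).add_posSemidef hH
  have hB : B.PosDef :=
    (sigmoid_aux_smul_posDef (by positivity) Matrix.PosDef.one).add_posSemidef hH
  set qA := d ⬝ᵥ (A⁻¹ *ᵥ d) with hqA
  set qB := d ⬝ᵥ (B⁻¹ *ᵥ d) with hqB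
  have hqAnn : 0 ≤ qA := by have := hA.inv.posSemidef.dotProduct_mulVec_nonneg d; simpa using this
  have hqBnn : 0 ≤ qB := by have := hB.inv.posSemidef.dotProduct_mulVec_nonneg d; simpa using this
  have hqmono : qA ≤ qB := by
    have hc : 0 ≤ s⁻¹ - t⁻¹ := by
      have := inv_anti₀ hs hst
      linarith
    have hAB : A = B + (s⁻¹ - t⁻¹) • (1 : Matrix (Fin p) (Fin p) ℝ) := by
      rw [hAdef, hBdef]
      rw [sub_smul]
      abel
    rw [hqA, hqB, hAB]
    exact sigmoid_aux_quad_mono d hB hc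
  -- now compare the arguments
  have hXA : (0:ℝ) < 1 + Real.pi / 8 * qA := by
    have : (0:ℝ) ≤ Real.pi / 8 * qA := by positivity
    linarith
  have hXB : (0:ℝ) < 1 + Real.pi / 8 * qB := by
    have : (0:ℝ) ≤ Real.pi / 8 * qB := by positivity
    linarith
  have hXle : 1 + Real.pi / 8 * qA ≤ 1 + Real.pi / 8 * qB := by
    have hpi : (0:ℝ) ≤ Real.pi / 8 := by positivity
    nlinarith
  have hsqA : 0 < Real.sqrt (1 + Real.pi / 8 * qA) := Real.sqrt_pos.2 hXA
  have hsqB : 0 < Real.sqrt (1 + Real.pi / 8 * qB) := Real.sqrt_pos.2 hXB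
  have hsqle : Real.sqrt (1 + Real.pi / 8 * qA) ≤ Real.sqrt (1 + Real.pi / 8 * qB) :=
    Real.sqrt_le_sqrt hXle
  apply sigmoid_mono
  rw [abs_div, abs_div, abs_of_nonneg (Real.sqrt_nonneg _), abs_of_nonneg (Real.sqrt_nonneg _)]
  exact div_le_div_of_nonneg_left (abs_nonneg f) hsqA hsqle
end

section
/- Let f ∈ ℝ, d ∈ ℝ^p, and let H be a p×p real symmetric positive DEFINITE matrix. For s > 0 define z(s) = f / √(1 + (π/8)·dᵀ·(s⁻¹·I + H)⁻¹·d). Then as s → ∞, σ(|z(s)|) converges to σ( |f| / √(1 + (π/8)·dᵀH⁻¹d) ), and this limit satisfies σ( |f| / √(1 + (π/8)·dᵀH⁻¹d) ) ≤ σ( |f| / √(1 + (π/8)·‖d‖²/λ_max(H)) ). (Limit σ₀² → ∞ in Proposition 2.5: the asymptotic confidence is bounded in terms of the largest eigenvalue λ_max(H) of the log-likelihood Hessian.) -/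
open Matrix Filter

lemma sigmoid_continuous' : Continuous sigmoid := by
  apply continuous_const.div (by continuity)
  intro t; positivity

lemma sigmoid_mono' {a b : ℝ} (h : a ≤ b) : sigmoid a ≤ sigmoid b := by
  unfold sigmoid
  apply one_div_le_one_div_of_le (by positivity)
  have := Real.exp_le_exp.2 (neg_le_neg h)
  linarith

lemma quad_ge' {p : ℕ} [Nonempty (Fin p)] (d : Fin p → ℝ) (H : Matrix (Fin p) (Fin p) ℝ)
    (hH : H.PosDef) :
    (d ⬝ᵥ d) / (⨆ i, hH.1.eigenvalues i) ≤ d ⬝ᵥ (H⁻¹ *ᵥ d) := by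
  have hHerm := hH.1
  set V : Matrix (Fin p) (Fin p) ℝ := (hHerm.eigenvectorUnitary : Matrix (Fin p) (Fin p) ℝ) with hV
  have hmem : V ∈ Matrix.unitaryGroup (Fin p) ℝ := hHerm.eigenvectorUnitary.2
  have hVs : star V * V = 1 := (Matrix.mem_unitaryGroup_iff').mp hmem
  have hsV : V * star V = 1 := (Matrix.mem_unitaryGroup_iff).mp hmem
  have hstarT : star V = Vᵀ := by
    rw [Matrix.star_eq_conjTranspose, Matrix.conjTranspose_eq_transpose_of_trivial]
  set lam := hHerm.eigenvalues with hlam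
  have hspec : H = V * diagonal lam * star V := by
    have := hHerm.spectral_theorem
    simpa using this
  have hpos : ∀ i, 0 < lam i := hH.eigenvalues_pos
  have hbdd : BddAbove (Set.range lam) := Set.Finite.bddAbove (Set.finite_range _)
  have hle : ∀ i, lam i ≤ ⨆ i, lam i := fun i => le_ciSup hbdd i
  have hmaxpos : 0 < ⨆ i, lam i :=
    lt_of_lt_of_le (hpos (Classical.arbitrary _)) (hle _)
  have hinv : H⁻¹ = V * diagonal (fun i => (lam i)⁻¹) * star V := by
    apply Matrix.inv_eq_left_inv
    rw [hspec]
    have h1 : (fun i => (lam i)⁻¹ * lam i) = fun _ => (1:ℝ) :=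
      funext fun i => inv_mul_cancel₀ (hpos i).ne'
    calc (V * diagonal (fun i => (lam i)⁻¹) * star V) * (V * diagonal lam * star V)
        = V * (diagonal (fun i => (lam i)⁻¹) * ((star V * V) * diagonal lam)) * star V := by
          noncomm_ring
      _ = V * (diagonal (fun i => (lam i)⁻¹) * diagonal lam) * star V := by
          rw [hVs, one_mul]
      _ = 1 := by
          rw [Matrix.diagonal_mul_diagonal, h1, Matrix.diagonal_one, mul_one, hsV]
  set c : Fin p → ℝ := Vᵀ *ᵥ d with hc
  have hdd : d ⬝ᵥ d = c ⬝ᵥ c := by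
    rw [eq_comm, hc, Matrix.dotProduct_mulVec, Matrix.vecMul_transpose,
      Matrix.mulVec_mulVec, ← hstarT, hsV, Matrix.one_mulVec]
  have hq : d ⬝ᵥ (H⁻¹ *ᵥ d) = c ⬝ᵥ (diagonal (fun i => (lam i)⁻¹) *ᵥ c) := by
    rw [hinv, hstarT, ← Matrix.mulVec_mulVec, ← Matrix.mulVec_mulVec,
      Matrix.dotProduct_mulVec, ← Matrix.mulVec_transpose, ← hc]
  rw [hdd, hq]
  simp only [dotProduct, Matrix.mulVec_diagonal]
  rw [div_eq_mul_inv, Finset.sum_mul]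
  apply Finset.sum_le_sum
  intro i _
  have h1 : (⨆ i, lam i)⁻¹ ≤ (lam i)⁻¹ := inv_anti₀ (hpos i) (hle i)
  nlinarith [mul_self_nonneg (c i), mul_le_mul_of_nonneg_left h1 (mul_self_nonneg (c i))]

/-- Limit `σ₀² → ∞` in Proposition 2.5: as `s → ∞`, `σ(|z(s)|)` converges to
`σ(|f| / √(1 + (π/8)·dᵀH⁻¹d))`, which is bounded by
`σ(|f| / √(1 + (π/8)·‖d‖²/λ_max(H)))`. -/
theorem tendsto_confidence_priorVar_top {p : ℕ}
    (f : ℝ) (d : Fin p → ℝ)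
    (H : Matrix (Fin p) (Fin p) ℝ) (hH : H.PosDef) :
    Tendsto
      (fun s : ℝ =>
        sigmoid |f / Real.sqrt (1 + Real.pi / 8 *
          (d ⬝ᵥ ((s⁻¹ • (1 : Matrix (Fin p) (Fin p) ℝ) + H)⁻¹ *ᵥ d)))|)
      atTop
      (nhds (sigmoid (|f| /
        Real.sqrt (1 + Real.pi / 8 * (d ⬝ᵥ (H⁻¹ *ᵥ d)))))) ∧
    sigmoid (|f| / Real.sqrt (1 + Real.pi / 8 * (d ⬝ᵥ (H⁻¹ *ᵥ d)))) ≤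
      sigmoid (|f| / Real.sqrt (1 + Real.pi / 8 *
        ((d ⬝ᵥ d) / ⨆ i, hH.1.eigenvalues i))) := by
  have hq0 : 0 ≤ d ⬝ᵥ (H⁻¹ *ᵥ d) := (hH.inv.posSemidef).dotProduct_mulVec_nonneg d
  have hden : 0 < 1 + Real.pi / 8 * (d ⬝ᵥ (H⁻¹ *ᵥ d)) := by positivity
  constructor
  · have h1 : Tendsto (fun s : ℝ => s⁻¹ • (1 : Matrix (Fin p) (Fin p) ℝ) + H) atTop (nhds H) := by
      have h0 : Tendsto (fun s : ℝ => s⁻¹ • (1 : Matrix (Fin p) (Fin p) ℝ)) atTop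
          (nhds ((0:ℝ) • (1 : Matrix (Fin p) (Fin p) ℝ))) :=
        (tendsto_inv_atTop_zero).smul_const _
      have := h0.add_const H
      simpa using this
    have h2 : ContinuousAt Inv.inv H := by
      apply continuousAt_matrix_inv
      rw [Ring.inverse_eq_inv']
      exact continuousAt_inv₀ hH.det_pos.ne'
    have h3 : Tendsto (fun s : ℝ => (s⁻¹ • (1 : Matrix (Fin p) (Fin p) ℝ) + H)⁻¹) atTop
        (nhds H⁻¹) := h2.tendsto.comp h1
    have h4 : Continuous (fun M : Matrix (Fin p) (Fin p) ℝ => d ⬝ᵥ (M *ᵥ d)) :=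
      continuous_const.dotProduct (continuous_id.matrix_mulVec continuous_const)
    have h5 : Tendsto (fun s : ℝ => d ⬝ᵥ ((s⁻¹ • (1 : Matrix (Fin p) (Fin p) ℝ) + H)⁻¹ *ᵥ d))
        atTop (nhds (d ⬝ᵥ (H⁻¹ *ᵥ d))) := (h4.tendsto _).comp h3
    have houter : ContinuousAt (fun t : ℝ => sigmoid |f / Real.sqrt (1 + Real.pi / 8 * t)|)
        (d ⬝ᵥ (H⁻¹ *ᵥ d)) := by
      apply sigmoid_continuous'.continuousAt.comp
      apply ContinuousAt.abs
      apply ContinuousAt.div continuousAt_const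
      · exact (Real.continuous_sqrt.continuousAt).comp (by fun_prop)
      · exact (Real.sqrt_pos.2 hden).ne'
    have := houter.tendsto.comp h5
    simp only [Function.comp_def] at this
    convert this using 2
    rw [abs_div, abs_of_nonneg (Real.sqrt_nonneg _)]
  · rcases isEmpty_or_nonempty (Fin p) with hpe | hpn
    · simp [dotProduct, Finset.univ_eq_empty]
    · have hkey := quad_ge' d H hH
      have hdd0 : 0 ≤ d ⬝ᵥ d := by
        simp only [dotProduct]
        exact Finset.sum_nonneg fun i _ => mul_self_nonneg _
      have hmaxpos : 0 < ⨆ i, hH.1.eigenvalues i := by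
        have hpos := hH.eigenvalues_pos (Classical.arbitrary (Fin p))
        have hle := le_ciSup (Set.Finite.bddAbove (Set.finite_range hH.1.eigenvalues))
          (Classical.arbitrary (Fin p))
        linarith
      have hq2 : 0 ≤ (d ⬝ᵥ d) / ⨆ i, hH.1.eigenvalues i := div_nonneg hdd0 hmaxpos.le
      apply sigmoid_mono'
      apply div_le_div_of_nonneg_left (abs_nonneg f)
      · apply Real.sqrt_pos.2
        positivity
      · apply Real.sqrt_le_sqrt
        have hpi : (0:ℝ) < Real.pi := Real.pi_pos
        nlinarith
end
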